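/- The functions I₀ = u, I₁ = x u_x + y u_y, I_{2a} = x²u_{xx} + 2xy u_{xy} + y²u_{yy}, I_{2b} = x u_y u_{xx} − y u_x u_{yy} + (y u_y − x u_x)u_{xy}, and I_{2c} = u_x²u_{yy} − 2u_x u_y u_{xy} + u_y²u_{xx} are functionally independent on J²ℝ²: their differentials are linearly independent at some (equivalently generic) point of the 8-dimensional jet space with coordinates (x,y,u,u_x,u_y,u_{xx},u_{xy},u_{yy}). -/

import Mathlib

open Matrix

noncomputable section

/-- Coordinates on `J²ℝ²`: `(x, y, u, u_x, u_y, u_xx, u_xy, u_yy)`. -/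
def I0 : (Fin 8 → ℝ) → ℝ := fun p => p 2

def I1 : (Fin 8 → ℝ) → ℝ := fun p => p 0 * p 3 + p 1 * p 4

def I2a : (Fin 8 → ℝ) → ℝ := fun p =>
  (p 0) ^ 2 * p 5 + 2 * p 0 * p 1 * p 6 + (p 1) ^ 2 * p 7

def I2b : (Fin 8 → ℝ) → ℝ := fun p =>
  p 0 * p 4 * p 5 - p 1 * p 3 * p 7 + (p 1 * p 4 - p 0 * p 3) * p 6

def I2c : (Fin 8 → ℝ) → ℝ := fun p =>
  (p 3) ^ 2 * p 7 - 2 * p 3 * p 4 * p 6 + (p 4) ^ 2 * p 5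

set_option maxHeartbeats 1000000 in
/-- Functional independence: the differentials of the five invariants are
linearly independent at some point of the 8-dimensional jet space. -/
theorem stmt_2 : ∃ p : Fin 8 → ℝ,
    LinearIndependent ℝ
      ![fderiv ℝ I0 p, fderiv ℝ I1 p, fderiv ℝ I2a p, fderiv ℝ I2b p, fderiv ℝ I2c p] := by
  set p : Fin 8 → ℝ := fun i => if i = 0 ∨ i = 3 ∨ i = 6 then 1 else 0 with hp
  refine ⟨p, ?_⟩
  have hIa : I2a = fun q : Fin 8 → ℝ =>
      q 0 * q 0 * q 5 + 2 * q 0 * q 1 * q 6 + q 1 * q 1 * q 7 := by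
    funext q; simp only [I2a]; ring
  have hIc : I2c = fun q : Fin 8 → ℝ =>
      q 3 * q 3 * q 7 - 2 * q 3 * q 4 * q 6 + q 4 * q 4 * q 5 := by
    funext q; simp only [I2c]; ring
  rw [hIa, hIc]
  have e : ∀ i : Fin 8, HasFDerivAt (fun q : Fin 8 → ℝ => q i)
      (ContinuousLinearMap.proj (R := ℝ) i) p := fun i => hasFDerivAt_apply i p
  have h0 : HasFDerivAt I0 (ContinuousLinearMap.proj (R := ℝ) 2) p := e 2
  have h1 : HasFDerivAt I1 _ p := ((e 0).mul (e 3)).add ((e 1).mul (e 4))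
  have h2a : HasFDerivAt (fun q : Fin 8 → ℝ =>
      q 0 * q 0 * q 5 + 2 * q 0 * q 1 * q 6 + q 1 * q 1 * q 7) _ p := ((((e 0).mul (e 0)).mul (e 5)).add ((((e 0).const_mul 2).mul (e 1)).mul (e 6))).add
    (((e 1).mul (e 1)).mul (e 7))
  have h2b : HasFDerivAt I2b _ p :=
    ((((e 0).mul (e 4)).mul (e 5)).sub (((e 1).mul (e 3)).mul (e 7))).add
    ((((e 1).mul (e 4)).sub ((e 0).mul (e 3))).mul (e 6))
  have h2c : HasFDerivAt (fun q : Fin 8 → ℝ =>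
      q 3 * q 3 * q 7 - 2 * q 3 * q 4 * q 6 + q 4 * q 4 * q 5) _ p := ((((e 3).mul (e 3)).mul (e 7)).sub ((((e 3).const_mul 2).mul (e 4)).mul (e 6))).add
    (((e 4).mul (e 4)).mul (e 5))
  rw [Fintype.linearIndependent_iff]
  intro g hg
  simp only [h0.fderiv, h1.fderiv, h2a.fderiv, h2b.fderiv, h2c.fderiv] at hg
  have ev : ∀ j : Fin 8, _ := fun j =>
    congrArg (fun L : (Fin 8 → ℝ) →L[ℝ] ℝ => L (Pi.single j 1)) hg
  have e2 := ev 2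
  have e6 := ev 6
  have e5 := ev 5
  have e7 := ev 7
  have e0 := ev 0
  simp [Fin.sum_univ_five, Pi.single_apply, hp] at e2 e6 e5 e7 e0
  intro i
  fin_cases i
  · exact e2
  · show g 1 = 0; linarith
  · exact e5
  · exact e6
  · exact e7
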